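/- Let A be a group with a normal subgroup H of finite index. Then A embeds into the wreath product (A/H) ≀ H, where the wreath product is with respect to the left translation action of A/H on itself. -/

import Mathlib

/-- The left-translation permutation action of a group `Q` on the direct product `Q → H`
of copies of `H` indexed by `Q`, as a homomorphism `Q →* MulAut (Q → H)`. This is the
action defining the (unrestricted) wreath product `Q ≀ H = (Q → H) ⋊ Q`. -/
def permMulAut (Q H : Type*) [Group Q] [Group H] : Q →* MulAut (Q → H) where
  toFun q :=
    { toFun := fun f x => f (q⁻¹ * x)
      invFun := fun f x => f (q * x)
      left_inv := fun f => funext fun x => by simp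
      right_inv := fun f => funext fun x => by simp
      map_mul' := fun f g => rfl }
  map_one' := by
    ext f x
    simp
  map_mul' q q' := by
    ext f x
    simp [mul_assoc]

/-- Krasner–Kaloujnine: a group `A` with a normal subgroup `H` of finite index embeds
into the wreath product `(A/H) ≀ H`, where `A/H` acts on `H^(A/H)` by permuting
coordinates via left translation. -/
theorem stmt_13 {A : Type*} [Group A] (H : Subgroup A) [H.Normal] [H.FiniteIndex] :
    ∃ f : A →* ((A ⧸ H → H) ⋊[permMulAut (A ⧸ H) H] (A ⧸ H)),
      Function.Injective f := by
  classical
  have mem : ∀ (a : A) (x : A ⧸ H),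
      (x.out)⁻¹ * a * (((QuotientGroup.mk a : A ⧸ H))⁻¹ * x).out ∈ H := by
    intro a x
    rw [← QuotientGroup.eq_one_iff]
    simp only [QuotientGroup.mk_mul, QuotientGroup.mk_inv, QuotientGroup.out_eq']
    group
  refine ⟨MonoidHom.mk' (fun a =>
      ⟨fun x => ⟨(x.out)⁻¹ * a * (((QuotientGroup.mk a : A ⧸ H))⁻¹ * x).out, mem a x⟩,
        QuotientGroup.mk a⟩) ?_, ?_⟩
  · intro a b
    ext x
    · rw [SemidirectProduct.mul_left]
      simp only [SemidirectProduct.mul_left, Pi.mul_apply, permMulAut,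
        MonoidHom.coe_mk, OneHom.coe_mk, MulEquiv.coe_mk, Equiv.coe_fn_mk,
        Subgroup.coe_mul, QuotientGroup.mk_mul, mul_inv_rev]
      group
    · simp
  · intro a b hab
    have h2 : (QuotientGroup.mk a : A ⧸ H) = QuotientGroup.mk b :=
      congrArg SemidirectProduct.right hab
    have h1 := congrArg (fun z => ((SemidirectProduct.left z) (1 : A ⧸ H) : A)) hab
    simp only [MonoidHom.mk'_apply, h2] at h1
    exact mul_left_cancel (mul_right_cancel h1)
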